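/- arXiv:1912.01847 — 4 statements merged into one kernel-verified Lean document; each statement's English description precedes it below -/
import Mathlib

section
/- Let (Ω, μ) be a measure space with μ(Ω) < ∞, let v : Ω → ℝ be measurable with ∫_Ω |v|⁴ dμ < ∞, and let c₁, c₂, c₃ > 0. Define p₃ : ℝ → ℝ by p₃(x) = −c₁x + c₂x² − c₃x³. Then ∫_Ω p₃(v(ζ))·v(ζ) dμ(ζ) ≤ (27·c₂⁴/(32·c₃³))·μ(Ω) − c₁·∫_Ω v² dμ − (c₃/2)·∫_Ω v⁴ dμ. -/
open MeasureTheory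

/-- Dissipation estimate for the FitzHugh–Nagumo nonlinearity
`p₃(x) = −c₁x + c₂x² − c₃x³`:
`∫ p₃(v) v dμ ≤ (27 c₂⁴/(32 c₃³)) μ(Ω) − c₁ ∫ v² dμ − (c₃/2) ∫ v⁴ dμ`. -/
theorem fhn_nonlinearity_dissipation {Ω : Type*} [MeasurableSpace Ω]
    (μ : Measure Ω) [IsFiniteMeasure μ]
    (v : Ω → ℝ) (hv : Measurable v)
    (h4 : Integrable (fun ζ => |v ζ| ^ 4) μ)
    (c₁ c₂ c₃ : ℝ) (hc₁ : 0 < c₁) (hc₂ : 0 < c₂) (hc₃ : 0 < c₃)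
    (p₃ : ℝ → ℝ) (hp₃ : ∀ x, p₃ x = -c₁ * x + c₂ * x ^ 2 - c₃ * x ^ 3) :
    ∫ ζ, p₃ (v ζ) * v ζ ∂μ ≤
      (27 * c₂ ^ 4 / (32 * c₃ ^ 3)) * (μ Set.univ).toReal
        - c₁ * ∫ ζ, (v ζ) ^ 2 ∂μ - (c₃ / 2) * ∫ ζ, (v ζ) ^ 4 ∂μ := by
  set K : ℝ := 27 * c₂ ^ 4 / (32 * c₃ ^ 3) with hK
  have hv4 : Integrable (fun ζ => (v ζ) ^ 4) μ := by
    have : ∀ x : ℝ, |x| ^ 4 = x ^ 4 := fun x => by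
      rw [← abs_pow]; exact abs_of_nonneg (by positivity)
    simpa [this] using h4
  have hdom : Integrable (fun ζ => 1 + (v ζ) ^ 4) μ := (integrable_const 1).add hv4
  have hv2 : Integrable (fun ζ => (v ζ) ^ 2) μ := by
    refine hdom.mono' (hv.pow_const 2).aestronglyMeasurable (ae_of_all _ fun ζ => ?_)
    rw [Real.norm_eq_abs, abs_of_nonneg (by positivity)]
    nlinarith [sq_nonneg ((v ζ) ^ 2 - 1)]
  have hv3 : Integrable (fun ζ => (v ζ) ^ 3) μ := by
    refine hdom.mono' (hv.pow_const 3).aestronglyMeasurable (ae_of_all _ fun ζ => ?_)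
    rw [Real.norm_eq_abs, abs_pow]
    set a := |v ζ| with ha
    have ha0 : 0 ≤ a := abs_nonneg _
    have h4a : a ^ 4 = (v ζ) ^ 4 := by
      rw [ha, ← abs_pow]; exact abs_of_nonneg (by positivity)
    nlinarith [sq_nonneg (a ^ 2 - a), sq_nonneg (a - 1), sq_nonneg (a ^ 2 - 1)]
  have hf : Integrable (fun ζ => p₃ (v ζ) * v ζ) μ := by
    have : (fun ζ => p₃ (v ζ) * v ζ) =
        fun ζ => -c₁ * (v ζ) ^ 2 + c₂ * (v ζ) ^ 3 - c₃ * (v ζ) ^ 4 := by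
      funext ζ; rw [hp₃]; ring
    rw [this]
    exact ((hv2.const_mul _).add (hv3.const_mul _)).sub (hv4.const_mul _)
  have hg : Integrable (fun ζ => K - c₁ * (v ζ) ^ 2 - (c₃ / 2) * (v ζ) ^ 4) μ :=
    ((integrable_const K).sub (hv2.const_mul _)).sub (hv4.const_mul _)
  have hmono : ∫ ζ, p₃ (v ζ) * v ζ ∂μ ≤
      ∫ ζ, (K - c₁ * (v ζ) ^ 2 - (c₃ / 2) * (v ζ) ^ 4) ∂μ := by
    refine integral_mono hf hg fun ζ => ?_
    rw [hp₃]
    set x := v ζ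
    have key : c₂ * x ^ 3 - (c₃ / 2) * x ^ 4 ≤ K := by
      rw [hK, le_div_iff₀ (by positivity)]
      nlinarith [mul_nonneg (sq_nonneg (2 * c₃ * x - 3 * c₂)) (sq_nonneg (2 * c₃ * x + c₂)),
        mul_nonneg (sq_nonneg (2 * c₃ * x - 3 * c₂)) (sq_nonneg c₂)]
    nlinarith [key]
  calc ∫ ζ, p₃ (v ζ) * v ζ ∂μ ≤ _ := hmono
    _ = K * (μ Set.univ).toReal - c₁ * ∫ ζ, (v ζ) ^ 2 ∂μ
        - (c₃ / 2) * ∫ ζ, (v ζ) ^ 4 ∂μ := by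
      have h1 : Integrable (fun ζ => K - c₁ * (v ζ) ^ 2) μ :=
        (integrable_const K).sub (hv2.const_mul c₁)
      rw [integral_sub h1 (hv4.const_mul (c₃ / 2)),
        integral_sub (integrable_const K) (hv2.const_mul c₁),
        integral_const, integral_const_mul, integral_const_mul, smul_eq_mul,
        measureReal_def]
      ring
end

section
/- Let (b_j)_{j∈ℕ} be real numbers and (β_j)_{j∈ℕ} positive real numbers such that the series Σ_j b_j²/β_j converges with sum S. Let δ ∈ ℝ, U ≥ 0, and let u : [δ,∞) → ℝ be measurable with |u(s)| ≤ U for almost every s ≥ δ. Then for every t ≥ δ, the family j ↦ β_j·b_j²·(∫_δ^t e^{−β_j(t−s)}·u(s) ds)² is summable and Σ_j β_j·b_j²·(∫_δ^t e^{−β_j(t−s)}·u(s) ds)² ≤ U²·S. -/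
open MeasureTheory intervalIntegral

/-- Spectral bound `Σ β_j b_j² (∫_δ^t e^{−β_j(t−s)} u(s) ds)² ≤ U² S`, where
`S = Σ b_j²/β_j` and `|u| ≤ U` a.e. on `[δ,∞)`. -/
theorem spectral_norm_bound (b β : ℕ → ℝ) (hβ : ∀ j, 0 < β j) (S : ℝ)
    (hsum : HasSum (fun j => b j ^ 2 / β j) S)
    (δ U : ℝ) (hU : 0 ≤ U) (u : ℝ → ℝ) (hu : Measurable u)
    (hbdd : ∀ᵐ s : ℝ, δ ≤ s → |u s| ≤ U) :
    ∀ t, δ ≤ t →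
      Summable (fun j =>
        β j * b j ^ 2 * (∫ s in δ..t, Real.exp (-β j * (t - s)) * u s) ^ 2) ∧
      (∑' j, β j * b j ^ 2 * (∫ s in δ..t, Real.exp (-β j * (t - s)) * u s) ^ 2)
        ≤ U ^ 2 * S := by
  intro t ht
  -- core estimate for each j
  have hI : ∀ j, |∫ s in δ..t, Real.exp (-β j * (t - s)) * u s| ≤ U / β j := by
    intro j
    set f : ℝ → ℝ := fun s => Real.exp (-β j * (t - s)) * u s with hf
    set g : ℝ → ℝ := fun s => U * Real.exp (-β j * (t - s)) with hg
    have hgc : Continuous g := by continuity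
    have hgint : IntervalIntegrable g volume δ t := hgc.intervalIntegrable δ t
    have hfmeas : Measurable f := by
      apply Measurable.mul _ hu
      exact (((measurable_const.sub measurable_id).const_mul (-β j)).exp)
    have hfint : IntervalIntegrable f volume δ t := by
      rw [intervalIntegrable_iff_integrableOn_Ioc_of_le ht]
      apply Integrable.mono' (integrable_const U) hfmeas.aestronglyMeasurable
      filter_upwards [ae_restrict_of_ae hbdd, ae_restrict_mem measurableSet_Ioc] with s hs hmem
      have h1 : Real.exp (-β j * (t - s)) ≤ 1 := by
        apply Real.exp_le_one_iff.mpr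
        have := hmem.2
        nlinarith [(hβ j).le]
      have h2 : |u s| ≤ U := hs hmem.1.le
      calc ‖f s‖ = Real.exp (-β j * (t - s)) * |u s| := by
            simp [f, abs_mul, abs_of_pos (Real.exp_pos _)]
        _ ≤ 1 * U := by
            apply mul_le_mul h1 h2 (abs_nonneg _) zero_le_one
        _ = U := one_mul U
    have habs : |∫ s in δ..t, f s| ≤ ∫ s in δ..t, |f s| := by
      have := intervalIntegral.abs_integral_le_integral_abs (μ := volume) (f := f) ht
      exact this
    have hmono : (∫ s in δ..t, |f s|) ≤ ∫ s in δ..t, g s := by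
      apply intervalIntegral.integral_mono_ae_restrict ht hfint.abs hgint
      filter_upwards [ae_restrict_of_ae hbdd, ae_restrict_mem measurableSet_Icc] with s hs hmem
      have h2 : |u s| ≤ U := hs hmem.1
      calc |f s| = Real.exp (-β j * (t - s)) * |u s| := by
            simp [f, abs_mul, abs_of_pos (Real.exp_pos _)]
        _ ≤ Real.exp (-β j * (t - s)) * U :=
            mul_le_mul_of_nonneg_left h2 (Real.exp_pos _).le
        _ = g s := mul_comm _ _
    -- compute ∫ g
    have hderiv : ∀ s ∈ Set.uIcc δ t, HasDerivAt (fun s => Real.exp (-β j * (t - s)) / β j)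
        (Real.exp (-β j * (t - s))) s := by
      intro s _
      have h1 : HasDerivAt (fun s : ℝ => -β j * (t - s)) (β j) s := by
        have := ((hasDerivAt_id s).const_sub t).const_mul (-β j)
        simpa using this
      have h2 := (h1.exp).div_const (β j)
      exact h2.congr_deriv (by rw [mul_div_assoc, div_self (hβ j).ne', mul_one])
    have hexpint : (∫ s in δ..t, Real.exp (-β j * (t - s))) =
        Real.exp (-β j * (t - t)) / β j - Real.exp (-β j * (t - δ)) / β j := by
      apply intervalIntegral.integral_eq_sub_of_hasDerivAt hderiv
      exact (Continuous.intervalIntegrable (by continuity) δ t)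
    have hexple : (∫ s in δ..t, Real.exp (-β j * (t - s))) ≤ 1 / β j := by
      rw [hexpint]
      simp only [sub_self, mul_zero, Real.exp_zero]
      have := (Real.exp_pos (-β j * (t - δ))).le
      have := (hβ j)
      have h3 : 0 ≤ Real.exp (-β j * (t - δ)) / β j := by positivity
      linarith
    have hgcalc : (∫ s in δ..t, g s) ≤ U / β j := by
      have : (∫ s in δ..t, g s) = U * ∫ s in δ..t, Real.exp (-β j * (t - s)) := by
        simp [g, intervalIntegral.integral_const_mul]
      rw [this]
      calc U * ∫ s in δ..t, Real.exp (-β j * (t - s)) ≤ U * (1 / β j) :=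
            mul_le_mul_of_nonneg_left hexple hU
        _ = U / β j := by ring
    linarith
  -- termwise bound
  have hterm : ∀ j, β j * b j ^ 2 * (∫ s in δ..t, Real.exp (-β j * (t - s)) * u s) ^ 2
      ≤ U ^ 2 * (b j ^ 2 / β j) := by
    intro j
    have h1 : (∫ s in δ..t, Real.exp (-β j * (t - s)) * u s) ^ 2 ≤ (U / β j) ^ 2 := by
      rw [← sq_abs]
      exact pow_le_pow_left₀ (abs_nonneg _) (hI j) 2
    have hb0 := (hβ j).le
    have hb0' := (hβ j).ne'
    have hb2 : (0:ℝ) ≤ β j * b j ^ 2 := by positivity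
    calc β j * b j ^ 2 * (∫ s in δ..t, Real.exp (-β j * (t - s)) * u s) ^ 2
        ≤ β j * b j ^ 2 * (U / β j) ^ 2 := mul_le_mul_of_nonneg_left h1 hb2
      _ = U ^ 2 * (b j ^ 2 / β j) := by
          field_simp
  have hnonneg : ∀ j, 0 ≤ β j * b j ^ 2 * (∫ s in δ..t, Real.exp (-β j * (t - s)) * u s) ^ 2 := by
    intro j
    have := (hβ j).le
    positivity
  have hsum2 : Summable (fun j => U ^ 2 * (b j ^ 2 / β j)) := hsum.summable.mul_left _
  have hS : Summable (fun j =>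
      β j * b j ^ 2 * (∫ s in δ..t, Real.exp (-β j * (t - s)) * u s) ^ 2) :=
    Summable.of_nonneg_of_le hnonneg hterm hsum2
  refine ⟨hS, ?_⟩
  calc (∑' j, β j * b j ^ 2 * (∫ s in δ..t, Real.exp (-β j * (t - s)) * u s) ^ 2)
      ≤ ∑' j, U ^ 2 * (b j ^ 2 / β j) := Summable.tsum_le_tsum hterm hS hsum2
    _ = U ^ 2 * ∑' j, (b j ^ 2 / β j) := tsum_mul_left
    _ = U ^ 2 * S := by rw [hsum.tsum_eq]
end

section
/- Let (b_j)_{j∈ℕ} be real numbers and (β_j)_{j∈ℕ} positive real numbers such that the series Σ_j b_j²/β_j converges. Let δ ∈ ℝ, U ≥ 0, and let u : [δ,∞) → ℝ be measurable with |u(s)| ≤ U for almost every s ≥ δ. Then for all s, t with δ ≤ s ≤ t, the family j ↦ β_j·b_j²·(∫_δ^t e^{−β_j(t−τ)}·u(τ) dτ − ∫_δ^s e^{−β_j(s−τ)}·u(τ) dτ)² is summable and Σ_j β_j·b_j²·(∫_δ^t e^{−β_j(t−τ)}·u(τ) dτ − ∫_δ^s e^{−β_j(s−τ)}·u(τ)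 dτ)² ≤ 4·U²·Σ_j (b_j²/β_j)·(1 − e^{−β_j(t−s)})². -/
open MeasureTheory intervalIntegral

private lemma int_exp_ker (c : ℝ) {β : ℝ} (hβ : 0 < β) (a b : ℝ) :
    ∫ τ in a..b, Real.exp (-β * (c - τ)) =
      (Real.exp (-β * (c - b)) - Real.exp (-β * (c - a))) / β := by
  have hderiv : ∀ x ∈ Set.uIcc a b,
      HasDerivAt (fun τ => Real.exp (-β * (c - τ)) / β) (Real.exp (-β * (c - x))) x := by
    intro x _
    have h1 : HasDerivAt (fun τ : ℝ => -β * (c - τ)) β x := by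
      simpa using ((hasDerivAt_id x).const_sub c).const_mul (-β)
    have h2 := (h1.exp).div_const β
    simpa [mul_div_assoc, mul_div_cancel_right₀ _ hβ.ne'] using h2
  have hcont : IntervalIntegrable (fun x => Real.exp (-β * (c - x))) volume a b :=
    (Real.continuous_exp.comp (by continuity)).intervalIntegrable a b
  rw [intervalIntegral.integral_eq_sub_of_hasDerivAt hderiv hcont]
  ring

private lemma intg_mul {u : ℝ → ℝ} (hu : Measurable u) {δ U : ℝ}
    (hbdd : ∀ᵐ s : ℝ, δ ≤ s → |u s| ≤ U)
    {β : ℝ} (c a b : ℝ) (hδa : δ ≤ a) (hab : a ≤ b) (hbc : b ≤ c) (hβ : 0 < β) :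
    IntervalIntegrable (fun τ => Real.exp (-β * (c - τ)) * u τ) volume a b := by
  rw [intervalIntegrable_iff_integrableOn_Ioc_of_le hab]
  apply Integrable.mono' (integrable_const U)
  · exact ((Real.continuous_exp.comp (by continuity)).aestronglyMeasurable.mul
      hu.aestronglyMeasurable)
  · filter_upwards [ae_restrict_mem measurableSet_Ioc, ae_restrict_of_ae hbdd] with τ hτ hub
    have h1 : Real.exp (-β * (c - τ)) ≤ 1 := by
      apply Real.exp_le_one_iff.2
      nlinarith [hτ.2, hbc]
    have h2 : |u τ| ≤ U := hub (hδa.trans hτ.1.le)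
    have h0 : 0 ≤ Real.exp (-β * (c - τ)) := (Real.exp_pos _).le
    calc ‖Real.exp (-β * (c - τ)) * u τ‖ = Real.exp (-β * (c - τ)) * |u τ| := by
          rw [Real.norm_eq_abs, abs_mul, abs_of_nonneg h0]
      _ ≤ 1 * U := mul_le_mul h1 h2 (abs_nonneg _) zero_le_one
      _ = U := one_mul U

private lemma abs_int_le {u : ℝ → ℝ} (hu : Measurable u) {δ U : ℝ} (hU : 0 ≤ U)
    (hbdd : ∀ᵐ s : ℝ, δ ≤ s → |u s| ≤ U)
    {β : ℝ} (c a b : ℝ) (hδa : δ ≤ a) (hab : a ≤ b) (hbc : b ≤ c) (hβ : 0 < β) :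
    |∫ τ in a..b, Real.exp (-β * (c - τ)) * u τ| ≤
      U * ((Real.exp (-β * (c - b)) - Real.exp (-β * (c - a))) / β) := by
  have hgint : IntervalIntegrable (fun τ => U * Real.exp (-β * (c - τ))) volume a b :=
    (continuous_const.mul (Real.continuous_exp.comp (by continuity))).intervalIntegrable a b
  have hb : ∀ᵐ τ ∂volume.restrict (Set.uIoc a b),
      ‖Real.exp (-β * (c - τ)) * u τ‖ ≤ U * Real.exp (-β * (c - τ)) := by
    rw [Set.uIoc_of_le hab]
    filter_upwards [ae_restrict_mem measurableSet_Ioc, ae_restrict_of_ae hbdd] with τ hτ hub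
    have h2 : |u τ| ≤ U := hub (hδa.trans hτ.1.le)
    have h0 : 0 ≤ Real.exp (-β * (c - τ)) := (Real.exp_pos _).le
    rw [Real.norm_eq_abs, abs_mul, abs_of_nonneg h0, mul_comm U]
    exact mul_le_mul_of_nonneg_left h2 h0
  have hmono : Real.exp (-β * (c - a)) ≤ Real.exp (-β * (c - b)) := by
    apply Real.exp_le_exp.2
    nlinarith
  have key := intervalIntegral.norm_integral_le_abs_of_norm_le hb hgint
  rw [Real.norm_eq_abs] at key
  refine key.trans ?_
  rw [intervalIntegral.integral_const_mul, int_exp_ker c hβ a b, abs_mul, abs_of_nonneg hU,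
    abs_of_nonneg (div_nonneg (sub_nonneg.2 hmono) hβ.le)]

/-- Key pointwise bound. -/
private lemma key_bound {u : ℝ → ℝ} (hu : Measurable u) {δ U : ℝ} (hU : 0 ≤ U)
    (hbdd : ∀ᵐ s : ℝ, δ ≤ s → |u s| ≤ U)
    {β : ℝ} (hβ : 0 < β) {s t : ℝ} (hδs : δ ≤ s) (hst : s ≤ t) :
    |(∫ τ in δ..t, Real.exp (-β * (t - τ)) * u τ) -
      ∫ τ in δ..s, Real.exp (-β * (s - τ)) * u τ| ≤
      2 * U / β * (1 - Real.exp (-β * (t - s))) := by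
  set E := Real.exp (-β * (t - s)) with hE
  have hδt : δ ≤ t := hδs.trans hst
  have hE1 : E ≤ 1 := Real.exp_le_one_iff.2 (by nlinarith)
  have hE0 : 0 < E := Real.exp_pos _
  -- split the first integral
  have hsplit : (∫ τ in δ..t, Real.exp (-β * (t - τ)) * u τ) =
      (∫ τ in δ..s, Real.exp (-β * (t - τ)) * u τ) +
      ∫ τ in s..t, Real.exp (-β * (t - τ)) * u τ :=
    (intervalIntegral.integral_add_adjacent_intervals
      (intg_mul hu hbdd t δ s le_rfl hδs hst hβ)
      (intg_mul hu hbdd t s t hδs hst le_rfl hβ)).symm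
  -- rewrite first piece kernel
  have hker : ∀ τ : ℝ, Real.exp (-β * (t - τ)) = E * Real.exp (-β * (s - τ)) := by
    intro τ
    rw [hE, ← Real.exp_add]
    ring_nf
  have h1 : (∫ τ in δ..s, Real.exp (-β * (t - τ)) * u τ) =
      E * ∫ τ in δ..s, Real.exp (-β * (s - τ)) * u τ := by
    rw [← intervalIntegral.integral_const_mul]
    congr 1
    ext τ
    rw [hker τ, mul_assoc]
  set A := ∫ τ in δ..s, Real.exp (-β * (s - τ)) * u τ with hA
  set B := ∫ τ in s..t, Real.exp (-β * (t - τ)) * u τ with hB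
  have hD : (∫ τ in δ..t, Real.exp (-β * (t - τ)) * u τ) - A = (E - 1) * A + B := by
    rw [hsplit, h1]; ring
  have hAbd : |A| ≤ U / β := by
    refine (abs_int_le hu hU hbdd s δ s le_rfl hδs le_rfl hβ).trans ?_
    have h1 : Real.exp (-β * (s - s)) - Real.exp (-β * (s - δ)) ≤ 1 := by
      have := (Real.exp_pos (-β * (s - δ))).le
      simp only [sub_self, mul_zero, Real.exp_zero]
      linarith
    have h2 : (Real.exp (-β * (s - s)) - Real.exp (-β * (s - δ))) / β ≤ 1 / β :=
      (div_le_div_iff_of_pos_right hβ).2 h1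
    calc U * ((Real.exp (-β * (s - s)) - Real.exp (-β * (s - δ))) / β) ≤ U * (1 / β) :=
          mul_le_mul_of_nonneg_left h2 hU
      _ = U / β := by ring
  have hBbd : |B| ≤ U * (1 - E) / β := by
    have := abs_int_le hu hU hbdd t s t hδs hst le_rfl hβ
    refine this.trans ?_
    simp only [sub_self, mul_zero, Real.exp_zero]
    rw [← hE]
    ring_nf
    rfl
  calc |(∫ τ in δ..t, Real.exp (-β * (t - τ)) * u τ) - A| = |(E - 1) * A + B| := by rw [hD]
    _ ≤ |(E - 1) * A| + |B| := abs_add_le _ _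
    _ = (1 - E) * |A| + |B| := by rw [abs_mul, abs_of_nonpos (by linarith), neg_sub]
    _ ≤ (1 - E) * (U / β) + U * (1 - E) / β := by
        gcongr
    _ = 2 * U / β * (1 - E) := by ring

/-- Difference estimate in the spectral representation:
`Σ β_j b_j² (∫_δ^t e^{−β_j(t−τ)}u(τ)dτ − ∫_δ^s e^{−β_j(s−τ)}u(τ)dτ)²
  ≤ 4U² Σ (b_j²/β_j)(1 − e^{−β_j(t−s)})²` for `δ ≤ s ≤ t`. -/
theorem spectral_difference_bound (b β : ℕ → ℝ) (hβ : ∀ j, 0 < β j)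
    (hsum : Summable fun j => b j ^ 2 / β j)
    (δ U : ℝ) (hU : 0 ≤ U) (u : ℝ → ℝ) (hu : Measurable u)
    (hbdd : ∀ᵐ s : ℝ, δ ≤ s → |u s| ≤ U) :
    ∀ s t, δ ≤ s → s ≤ t →
      Summable (fun j =>
        β j * b j ^ 2 *
          ((∫ τ in δ..t, Real.exp (-β j * (t - τ)) * u τ) -
            ∫ τ in δ..s, Real.exp (-β j * (s - τ)) * u τ) ^ 2) ∧
      (∑' j, β j * b j ^ 2 *
          ((∫ τ in δ..t, Real.exp (-β j * (t - τ)) * u τ) -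
            ∫ τ in δ..s, Real.exp (-β j * (s - τ)) * u τ) ^ 2)
        ≤ 4 * U ^ 2 *
            ∑' j, (b j ^ 2 / β j) * (1 - Real.exp (-β j * (t - s))) ^ 2 := by
  intro s t hδs hst
  set D : ℕ → ℝ := fun j =>
    (∫ τ in δ..t, Real.exp (-β j * (t - τ)) * u τ) -
      ∫ τ in δ..s, Real.exp (-β j * (s - τ)) * u τ with hDdef
  set g : ℕ → ℝ := fun j => 4 * U ^ 2 * ((b j ^ 2 / β j) * (1 - Real.exp (-β j * (t - s))) ^ 2)
    with hgdef
  have hE1 : ∀ j, Real.exp (-β j * (t - s)) ≤ 1 := fun j =>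
    Real.exp_le_one_iff.2 (by nlinarith [hβ j, hst])
  have hE0 : ∀ j, 0 < Real.exp (-β j * (t - s)) := fun j => Real.exp_pos _
  have hgsum' : Summable fun j => (b j ^ 2 / β j) * (1 - Real.exp (-β j * (t - s))) ^ 2 := by
    apply Summable.of_nonneg_of_le
      (fun j => mul_nonneg (div_nonneg (sq_nonneg _) (hβ j).le) (sq_nonneg _))
      (fun j => ?_) hsum
    have h1 : (1 - Real.exp (-β j * (t - s))) ^ 2 ≤ 1 := by
      nlinarith [hE1 j, (hE0 j).le]
    have h2 : 0 ≤ b j ^ 2 / β j := div_nonneg (sq_nonneg _) (hβ j).le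
    calc (b j ^ 2 / β j) * (1 - Real.exp (-β j * (t - s))) ^ 2 ≤ (b j ^ 2 / β j) * 1 :=
          mul_le_mul_of_nonneg_left h1 h2
      _ = b j ^ 2 / β j := mul_one _
  have hgsum : Summable g := hgsum'.mul_left _
  have hptwise : ∀ j, β j * b j ^ 2 * D j ^ 2 ≤ g j := by
    intro j
    have hkey := key_bound hu hU hbdd (hβ j) hδs hst
    have hDj : |D j| ≤ 2 * U / β j * (1 - Real.exp (-β j * (t - s))) := hkey
    have hsq : D j ^ 2 ≤ (2 * U / β j * (1 - Real.exp (-β j * (t - s)))) ^ 2 := by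
      rw [← sq_abs]
      exact pow_le_pow_left₀ (abs_nonneg _) hDj 2
    have hbpos : 0 < β j := hβ j
    calc β j * b j ^ 2 * D j ^ 2 ≤
        β j * b j ^ 2 * (2 * U / β j * (1 - Real.exp (-β j * (t - s)))) ^ 2 := by
          exact mul_le_mul_of_nonneg_left hsq (mul_nonneg (hβ j).le (sq_nonneg _))
      _ = g j := by
          simp only [hgdef]
          field_simp
          ring
  have hlsum : Summable fun j => β j * b j ^ 2 * D j ^ 2 :=
    Summable.of_nonneg_of_le
      (fun j => mul_nonneg (mul_nonneg (hβ j).le (sq_nonneg _)) (sq_nonneg _)) hptwise hgsum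
  refine ⟨hlsum, ?_⟩
  calc (∑' j, β j * b j ^ 2 * D j ^ 2) ≤ ∑' j, g j := Summable.tsum_le_tsum hptwise hlsum hgsum
    _ = 4 * U ^ 2 * ∑' j, (b j ^ 2 / β j) * (1 - Real.exp (-β j * (t - s))) ^ 2 :=
        tsum_mul_left
end

section
/- Let (b_j)_{j∈ℕ} be real numbers and (β_j)_{j∈ℕ} positive real numbers such that the series Σ_j b_j²/β_j converges with sum S. Let δ ∈ ℝ, U ≥ 0, and let u : [δ,∞) → ℝ be measurable with |u(s)| ≤ U for almost every s ≥ δ. For t ≥ δ define the real sequence x(t) = ( √(β_j)·b_j·∫_δ^t e^{−β_j(t−s)}·u(s) ds )_{j∈ℕ}. Then for every t ≥ δ the sequence x(t) belongs to ℓ²(ℕ) with ‖x(t)‖_{ℓ²} ≤ U·√S, and the map t ↦ x(t) from [δ,∞) to ℓ²(ℕ) is uniformly continuous; in particular it is bounded and uniformly continuous on [δ,∞). -/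
open MeasureTheory intervalIntegral ENNReal

private lemma exp_int_aux (β t a c : ℝ) (hβ : 0 < β) :
    ∫ s in a..c, Real.exp (-β * (t - s)) =
      (Real.exp (-β * (t - c)) - Real.exp (-β * (t - a))) / β := by
  have D : ∀ s : ℝ, HasDerivAt (fun s => Real.exp (-β * (t - s)) / β)
      (Real.exp (-β * (t - s))) s := by
    intro s
    have h1 : HasDerivAt (fun s : ℝ => -β * (t - s)) β s := by
      simpa using ((hasDerivAt_id s).const_sub t).const_mul (-β)
    have h3 := ((Real.hasDerivAt_exp (-β * (t - s))).comp s h1).div_const β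
    simpa [mul_div_cancel_right₀ _ hβ.ne'] using h3
  rw [integral_deriv_eq_sub' (fun s => Real.exp (-β * (t - s)) / β)
      (funext fun s => (D s).deriv) (fun s _ => (D s).differentiableAt)
      (by fun_prop)]
  ring

private lemma int_integrable_aux {β t a c δ U : ℝ} {u : ℝ → ℝ} (hβ : 0 < β)
    (hu : Measurable u) (hbdd : ∀ᵐ s : ℝ, δ ≤ s → |u s| ≤ U)
    (hδa : δ ≤ a) (hac : a ≤ c) :
    IntervalIntegrable (fun s => Real.exp (-β * (t - s)) * u s) volume a c := by
  rw [intervalIntegrable_iff_integrableOn_Ioc_of_le hac]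
  refine Measure.integrableOn_of_bounded (M := Real.exp (-β * (t - c)) * U)
    measure_Ioc_lt_top.ne
    (((((measurable_id.const_sub t).const_mul (-β)).exp).mul hu).aestronglyMeasurable) ?_
  rw [ae_restrict_iff' measurableSet_Ioc]
  filter_upwards [hbdd] with s hs hmem
  have h1 : |u s| ≤ U := hs (hδa.trans hmem.1.le)
  have h2 : Real.exp (-β * (t - s)) ≤ Real.exp (-β * (t - c)) :=
    Real.exp_le_exp.2 (by nlinarith [hmem.2])
  calc ‖Real.exp (-β * (t - s)) * u s‖ = Real.exp (-β * (t - s)) * |u s| := by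
        rw [Real.norm_eq_abs, abs_mul, abs_of_pos (Real.exp_pos _)]
    _ ≤ Real.exp (-β * (t - c)) * U := mul_le_mul h2 h1 (abs_nonneg _) (Real.exp_pos _).le

private lemma key_bound_aux {β δ U a c : ℝ} {u : ℝ → ℝ} (hβ : 0 < β) (hU : 0 ≤ U)
    (hu : Measurable u) (hbdd : ∀ᵐ s : ℝ, δ ≤ s → |u s| ≤ U)
    (hδa : δ ≤ a) (hac : a ≤ c) :
    |∫ s in a..c, Real.exp (-β * (c - s)) * u s| ≤ U / β * min 1 (β * (c - a)) := by
  have hint := int_integrable_aux (t := c) hβ hu hbdd hδa hac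
  have hexp : IntervalIntegrable (fun s => U * Real.exp (-β * (c - s))) volume a c :=
    (by fun_prop : Continuous fun s : ℝ => U * Real.exp (-β * (c - s))).intervalIntegrable a c
  have h1 : |∫ s in a..c, Real.exp (-β * (c - s)) * u s| ≤
      ∫ s in a..c, U * Real.exp (-β * (c - s)) := by
    refine (abs_integral_le_integral_abs hac).trans ?_
    refine integral_mono_ae_restrict hac hint.abs hexp ?_
    have hae : ∀ᵐ s ∂(volume.restrict (Set.Icc a c)),
        |Real.exp (-β * (c - s)) * u s| ≤ U * Real.exp (-β * (c - s)) := by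
      rw [ae_restrict_iff' measurableSet_Icc]
      filter_upwards [hbdd] with s hs hmem
      have h1 : |u s| ≤ U := hs (hδa.trans hmem.1)
      rw [abs_mul, abs_of_pos (Real.exp_pos _)]
      calc Real.exp (-β * (c - s)) * |u s| ≤ Real.exp (-β * (c - s)) * U :=
            mul_le_mul_of_nonneg_left h1 (Real.exp_pos _).le
        _ = U * Real.exp (-β * (c - s)) := mul_comm _ _
    exact hae
  have h2 : ∫ s in a..c, U * Real.exp (-β * (c - s)) =
      U * ((1 - Real.exp (-β * (c - a))) / β) := by
    rw [intervalIntegral.integral_const_mul, exp_int_aux β c a c hβ]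
    simp
  refine h1.trans ?_
  rw [h2]
  have hx : 0 ≤ β * (c - a) := mul_nonneg hβ.le (by linarith)
  have he1 : Real.exp (-β * (c - a)) ≤ 1 := by
    rw [Real.exp_le_one_iff]; nlinarith
  have he2 : 1 - β * (c - a) ≤ Real.exp (-β * (c - a)) := by
    have := Real.add_one_le_exp (-β * (c - a)); linarith
  have hmin : 1 - Real.exp (-β * (c - a)) ≤ min 1 (β * (c - a)) := by
    have := (Real.exp_pos (-β * (c - a))).le
    exact le_min (by linarith) (by linarith)
  have hUβ : 0 ≤ U / β := div_nonneg hU hβ.le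
  calc U * ((1 - Real.exp (-β * (c - a))) / β) = U / β * (1 - Real.exp (-β * (c - a))) := by
        ring
    _ ≤ U / β * min 1 (β * (c - a)) := mul_le_mul_of_nonneg_left hmin hUβ

private lemma simple_bound_aux {β δ U a c : ℝ} {u : ℝ → ℝ} (hβ : 0 < β) (hU : 0 ≤ U)
    (hu : Measurable u) (hbdd : ∀ᵐ s : ℝ, δ ≤ s → |u s| ≤ U)
    (hδa : δ ≤ a) (hac : a ≤ c) :
    |∫ s in a..c, Real.exp (-β * (c - s)) * u s| ≤ U / β := by
  refine (key_bound_aux hβ hU hu hbdd hδa hac).trans ?_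
  have hUβ : 0 ≤ U / β := div_nonneg hU hβ.le
  have : min 1 (β * (c - a)) ≤ 1 := min_le_left _ _
  nlinarith

private lemma diff_bound_aux {β δ U t t' : ℝ} {u : ℝ → ℝ} (hβ : 0 < β) (hU : 0 ≤ U)
    (hu : Measurable u) (hbdd : ∀ᵐ s : ℝ, δ ≤ s → |u s| ≤ U)
    (hδt : δ ≤ t) (htt : t ≤ t') :
    |(∫ s in δ..t', Real.exp (-β * (t' - s)) * u s) -
      ∫ s in δ..t, Real.exp (-β * (t - s)) * u s| ≤
      2 * (U / β) * min 1 (β * (t' - t)) := by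
  have hI1 := int_integrable_aux (t := t') hβ hu hbdd le_rfl hδt
  have hI2 := int_integrable_aux (t := t') hβ hu hbdd hδt htt
  have hsplit : (∫ s in δ..t', Real.exp (-β * (t' - s)) * u s) =
      (∫ s in δ..t, Real.exp (-β * (t' - s)) * u s) +
      ∫ s in t..t', Real.exp (-β * (t' - s)) * u s :=
    (integral_add_adjacent_intervals hI1 hI2).symm
  have hfac : (∫ s in δ..t, Real.exp (-β * (t' - s)) * u s) =
      Real.exp (-β * (t' - t)) * ∫ s in δ..t, Real.exp (-β * (t - s)) * u s := by
    rw [← intervalIntegral.integral_const_mul]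
    apply intervalIntegral.integral_congr
    intro s _
    show Real.exp (-β * (t' - s)) * u s =
      Real.exp (-β * (t' - t)) * (Real.exp (-β * (t - s)) * u s)
    rw [← mul_assoc, ← Real.exp_add]
    congr 2
    ring
  set I := ∫ s in δ..t, Real.exp (-β * (t - s)) * u s with hIdef
  set J := ∫ s in t..t', Real.exp (-β * (t' - s)) * u s with hJdef
  have hIb : |I| ≤ U / β := simple_bound_aux hβ hU hu hbdd le_rfl hδt
  have hJb : |J| ≤ U / β * min 1 (β * (t' - t)) :=
    key_bound_aux hβ hU hu hbdd hδt htt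
  have hx : 0 ≤ β * (t' - t) := mul_nonneg hβ.le (by linarith)
  have hminnn : 0 ≤ min 1 (β * (t' - t)) := le_min zero_le_one hx
  have hexp1 : |Real.exp (-β * (t' - t)) - 1| ≤ min 1 (β * (t' - t)) := by
    have h0 : Real.exp (-β * (t' - t)) ≤ 1 := by
      rw [Real.exp_le_one_iff]; nlinarith
    have h1 := Real.add_one_le_exp (-β * (t' - t))
    have h2 := (Real.exp_pos (-β * (t' - t))).le
    rw [abs_sub_comm, abs_of_nonneg (by linarith)]
    exact le_min (by linarith) (by linarith)
  have hre : Real.exp (-β * (t' - t)) * I + J - I =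
      (Real.exp (-β * (t' - t)) - 1) * I + J := by ring
  rw [hsplit, hfac, hre]
  calc |(Real.exp (-β * (t' - t)) - 1) * I + J|
      ≤ |(Real.exp (-β * (t' - t)) - 1) * I| + |J| := abs_add_le _ _
    _ = |Real.exp (-β * (t' - t)) - 1| * |I| + |J| := by rw [abs_mul]
    _ ≤ min 1 (β * (t' - t)) * (U / β) + U / β * min 1 (β * (t' - t)) :=
        add_le_add (mul_le_mul hexp1 hIb (abs_nonneg _) hminnn) hJb
    _ = 2 * (U / β) * min 1 (β * (t' - t)) := by ring

private lemma sq_helper_aux {B b I C : ℝ} (hB : 0 < B) (hI : |I| ≤ C) :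
    (Real.sqrt B * b * I) ^ 2 ≤ B * b ^ 2 * C ^ 2 := by
  have h1 : Real.sqrt B ^ 2 = B := Real.sq_sqrt hB.le
  have h2 : I ^ 2 ≤ C ^ 2 := by
    rw [← sq_abs I]; exact pow_le_pow_left₀ (abs_nonneg _) hI 2
  calc (Real.sqrt B * b * I) ^ 2 = Real.sqrt B ^ 2 * (b ^ 2 * I ^ 2) := by ring
    _ = B * (b ^ 2 * I ^ 2) := by rw [h1]
    _ ≤ B * (b ^ 2 * C ^ 2) :=
        mul_le_mul_of_nonneg_left (mul_le_mul_of_nonneg_left h2 (sq_nonneg _)) hB.le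
    _ = B * b ^ 2 * C ^ 2 := by ring

/-- The spectral representation `x(t) = (√β_j b_j ∫_δ^t e^{−β_j(t−s)}u(s)ds)_j`
defines, for `t ≥ δ`, an element of `ℓ²(ℕ)` of norm at most `U√S`, and the map
`t ↦ x(t)` is (bounded and) uniformly continuous on `[δ,∞)`. -/
theorem mild_solution_BUC_ell2 (b β : ℕ → ℝ) (hβ : ∀ j, 0 < β j) (S : ℝ)
    (hsum : HasSum (fun j => b j ^ 2 / β j) S)
    (δ U : ℝ) (hU : 0 ≤ U) (u : ℝ → ℝ) (hu : Measurable u)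
    (hbdd : ∀ᵐ s : ℝ, δ ≤ s → |u s| ≤ U) :
    ∃ x : ℝ → lp (fun _ : ℕ => ℝ) 2,
      (∀ t, δ ≤ t → ∀ j : ℕ,
        (x t : ∀ _ : ℕ, ℝ) j =
          Real.sqrt (β j) * b j * ∫ s in δ..t, Real.exp (-β j * (t - s)) * u s) ∧
      (∀ t, δ ≤ t → ‖x t‖ ≤ U * Real.sqrt S) ∧
      UniformContinuousOn x (Set.Ici δ) := by
  have hS : 0 ≤ S :=
    hsum.tsum_eq ▸ tsum_nonneg (fun j => div_nonneg (sq_nonneg _) (hβ j).le)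
  -- the candidate coefficients (using `max δ t` to make them defined for all `t`)
  set F : ℝ → ℕ → ℝ := fun t j =>
    Real.sqrt (β j) * b j * ∫ s in δ..max δ t, Real.exp (-β j * (max δ t - s)) * u s
    with hFdef
  have hconv : ∀ y : ℝ, y ^ (2 : ℝ≥0∞).toReal = y ^ 2 := fun y => by
    rw [show ((2 : ℝ≥0∞)).toReal = ((2 : ℕ) : ℝ) by norm_num, Real.rpow_natCast]
  -- termwise square bound
  have hFsq : ∀ t j, ‖F t j‖ ^ 2 ≤ U ^ 2 * (b j ^ 2 / β j) := by
    intro t j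
    have hI : |∫ s in δ..max δ t, Real.exp (-β j * (max δ t - s)) * u s| ≤ U / β j :=
      simple_bound_aux (hβ j) hU hu hbdd le_rfl (le_max_left _ _)
    have h1 : ‖F t j‖ ^ 2 = (F t j) ^ 2 := by rw [Real.norm_eq_abs, sq_abs]
    rw [h1, hFdef]
    refine (sq_helper_aux (hβ j) hI).trans_eq ?_
    have hne : (β j) ≠ 0 := (hβ j).ne'
    field_simp
  have hbsum : Summable fun j => U ^ 2 * (b j ^ 2 / β j) := hsum.summable.mul_left _
  have hFs : ∀ t, Summable fun j => ‖F t j‖ ^ 2 := fun t =>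
    Summable.of_nonneg_of_le (fun j => sq_nonneg _) (fun j => hFsq t j) hbsum
  have hmem : ∀ t, Memℓp (F t) 2 := by
    intro t
    apply memℓp_gen
    simpa only [hconv] using hFs t
  set x : ℝ → lp (fun _ : ℕ => ℝ) 2 := fun t => ⟨F t, hmem t⟩ with hxdef
  have hxc : ∀ t j, (x t : ∀ _ : ℕ, ℝ) j = F t j := fun t j => rfl
  have hnormsq : ∀ f : lp (fun _ : ℕ => ℝ) 2,
      ‖f‖ ^ 2 = ∑' j, ‖(f : ∀ _ : ℕ, ℝ) j‖ ^ 2 := by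
    intro f
    have h := lp.norm_rpow_eq_tsum (p := 2) (by norm_num) f
    simpa only [hconv] using h
  have hfsumm : ∀ f : lp (fun _ : ℕ => ℝ) 2,
      Summable fun j => ‖(f : ∀ _ : ℕ, ℝ) j‖ ^ 2 := by
    intro f
    have h := (lp.memℓp f).summable (p := 2) (by norm_num)
    simpa only [hconv] using h
  refine ⟨x, ?_, ?_, ?_⟩
  · intro t ht j
    rw [hxc, hFdef]
    simp [max_eq_right ht]
  · intro t ht
    refine lp.norm_le_of_tsum_le (by norm_num) (mul_nonneg hU (Real.sqrt_nonneg _)) ?_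
    have h1 : ∑' j, ‖(x t : ∀ _ : ℕ, ℝ) j‖ ^ (2 : ℝ≥0∞).toReal =
        ∑' j, ‖F t j‖ ^ 2 := by
      simp only [hconv, hxc]
    rw [h1, show (U * Real.sqrt S) ^ (2 : ℝ≥0∞).toReal = (U * Real.sqrt S) ^ 2 from
      hconv _]
    calc ∑' j, ‖F t j‖ ^ 2 ≤ ∑' j, U ^ 2 * (b j ^ 2 / β j) :=
          Summable.tsum_le_tsum (fun j => hFsq t j) (hFs t) hbsum
      _ = U ^ 2 * S := by rw [(hsum.mul_left (U ^ 2)).tsum_eq]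
      _ = (U * Real.sqrt S) ^ 2 := by
          rw [mul_pow, Real.sq_sqrt hS]
  · -- uniform continuity
    set g : ℝ → ℕ → ℝ := fun h j =>
      4 * U ^ 2 * (b j ^ 2 / β j) * (min 1 (β j * |h|)) ^ 2 with hgdef
    have hgnn : ∀ h j, 0 ≤ g h j := fun h j =>
      mul_nonneg (mul_nonneg (by positivity) (div_nonneg (sq_nonneg _) (hβ j).le))
        (sq_nonneg _)
    have hgle : ∀ h j, ‖g h j‖ ≤ 4 * U ^ 2 * (b j ^ 2 / β j) := by
      intro h j
      rw [Real.norm_eq_abs, abs_of_nonneg (hgnn h j)]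
      have hm0 : 0 ≤ min 1 (β j * |h|) :=
        le_min zero_le_one (mul_nonneg (hβ j).le (abs_nonneg _))
      have hm1 : min 1 (β j * |h|) ≤ 1 := min_le_left _ _
      have hm2 : (min 1 (β j * |h|)) ^ 2 ≤ 1 := by nlinarith
      have hc : 0 ≤ 4 * U ^ 2 * (b j ^ 2 / β j) :=
        mul_nonneg (by positivity) (div_nonneg (sq_nonneg _) (hβ j).le)
      simp only [hgdef]
      calc 4 * U ^ 2 * (b j ^ 2 / β j) * (min 1 (β j * |h|)) ^ 2
          ≤ 4 * U ^ 2 * (b j ^ 2 / β j) * 1 := mul_le_mul_of_nonneg_left hm2 hc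
        _ = 4 * U ^ 2 * (b j ^ 2 / β j) := mul_one _
    have hgsum : Summable fun j => 4 * U ^ 2 * (b j ^ 2 / β j) :=
      hsum.summable.mul_left _
    have hgsumm : ∀ h, Summable fun j => g h j := fun h =>
      Summable.of_nonneg_of_le (fun j => hgnn h j)
        (fun j => (le_abs_self _).trans ((Real.norm_eq_abs _ ▸ hgle h j))) hgsum
    have hDt : Filter.Tendsto (fun h => ∑' j, g h j) (nhds 0) (nhds 0) := by
      have hterm : ∀ j : ℕ, Filter.Tendsto (fun h => g h j) (nhds 0) (nhds (0 : ℝ)) := by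
        intro j
        have hc : Continuous fun h : ℝ => g h j := by
          simp only [hgdef]
          fun_prop
        have h00 : g 0 j = 0 := by norm_num [hgdef]
        simpa [h00] using hc.tendsto 0
      have h2 := tendsto_tsum_of_dominated_convergence (𝓕 := nhds (0 : ℝ)) hgsum hterm
        (Filter.Eventually.of_forall fun h j => hgle h j)
      simpa using h2
    rw [Metric.uniformContinuousOn_iff]
    intro ε hε
    have hev : ∀ᶠ h in nhds (0 : ℝ), ∑' j, g h j < ε ^ 2 :=
      hDt.eventually_lt_const (by positivity)
    rw [Metric.eventually_nhds_iff] at hev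
    obtain ⟨d, hd, hball⟩ := hev
    refine ⟨d, hd, ?_⟩
    have claim : ∀ s s', δ ≤ s → s ≤ s' → dist s s' < d → dist (x s') (x s) < ε := by
      intro s s' hδs hss hdist
      have hδs' : δ ≤ s' := hδs.trans hss
      have hdiff : ∀ j, ‖((x s' - x s : lp (fun _ : ℕ => ℝ) 2) : ∀ _ : ℕ, ℝ) j‖ ^ 2 ≤
          g (s' - s) j := by
        intro j
        have hco : ((x s' - x s : lp (fun _ : ℕ => ℝ) 2) : ∀ _ : ℕ, ℝ) j =
            F s' j - F s j := by
          rw [lp.coeFn_sub, Pi.sub_apply, hxc, hxc]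
        have hIdiff : |(∫ σ in δ..s', Real.exp (-β j * (s' - σ)) * u σ) -
            ∫ σ in δ..s, Real.exp (-β j * (s - σ)) * u σ| ≤
            2 * (U / β j) * min 1 (β j * (s' - s)) :=
          diff_bound_aux (hβ j) hU hu hbdd hδs hss
        have hFdiff : F s' j - F s j = Real.sqrt (β j) * b j *
            ((∫ σ in δ..s', Real.exp (-β j * (s' - σ)) * u σ) -
             ∫ σ in δ..s, Real.exp (-β j * (s - σ)) * u σ) := by
          rw [hFdef]
          simp only [max_eq_right hδs, max_eq_right hδs']
          ring
        rw [hco, Real.norm_eq_abs, sq_abs, hFdiff]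
        refine (sq_helper_aux (hβ j) hIdiff).trans_eq ?_
        rw [hgdef]
        have habs : |s' - s| = s' - s := abs_of_nonneg (by linarith)
        simp only [habs]
        have hne : (β j) ≠ 0 := (hβ j).ne'
        field_simp
        ring
      have hsq : ‖x s' - x s‖ ^ 2 ≤ ∑' j, g (s' - s) j := by
        rw [hnormsq]
        exact Summable.tsum_le_tsum hdiff (hfsumm _) (hgsumm _)
      have hlt : ∑' j, g (s' - s) j < ε ^ 2 := by
        apply hball
        rw [Real.dist_eq, sub_zero]
        have : dist s s' = |s' - s| := by rw [Real.dist_eq, abs_sub_comm]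
        rw [← this]; exact hdist
      rw [dist_eq_norm]
      have h2 : ‖x s' - x s‖ ^ 2 < ε ^ 2 := lt_of_le_of_lt hsq hlt
      exact lt_of_pow_lt_pow_left₀ 2 hε.le h2
    intro t1 ht1 t2 ht2 hdist
    rcases le_total t1 t2 with h | h
    · rw [dist_comm]
      exact claim t1 t2 ht1 h hdist
    · exact claim t2 t1 ht2 h (by rwa [dist_comm])
end
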